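/- Let A and B be L-algebras that are L-equivalent via an isomorphism Φ : A ⋊ L → B ⋊ L commuting with the extension maps. Define β : L → B by β(x) = π₁(Φ(0,x) − (0,x)), where π₁ is the projection onto B. Then β is a 1-cocycle in Z¹(L,B), and the restriction of Φ to A yields an L-isomorphism from A to B_β. -/

import Mathlib

/-- The bracket of the semidirect sum `A ⋊ L`. -/
def sdBracket {K L A : Type*} [Field K] [LieRing L] [LieAlgebra K L]
    [LieRing A] [LieAlgebra K A] (θ : L →ₗ⁅K⁆ LieDerivation K A A)
    (p q : A × L) : A × L :=
  (θ p.2 q.1 - θ q.2 p.1 + ⁅p.1, q.1⁆, ⁅p.2, q.2⁆)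

/-- If `A` and `B` are `L`-equivalent via an isomorphism `Φ : A ⋊ L → B ⋊ L`
commuting with the extension maps, then `β(x) = π₁(Φ(0,x) − (0,x))` is a
`1`-cocycle in `Z¹(L,B)` and the restriction `φ(a) = π₁(Φ(a,0))` of `Φ` to `A`
is an `L`-isomorphism from `A` to `B_β`. -/
theorem stmt3 {K L A B : Type*} [Field K] [LieRing L] [LieAlgebra K L]
    [LieRing A] [LieAlgebra K A] [LieRing B] [LieAlgebra K B]
    (θA : L →ₗ⁅K⁆ LieDerivation K A A) (θB : L →ₗ⁅K⁆ LieDerivation K B B)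
    (Φ : (A × L) ≃ₗ[K] (B × L))
    (hbr : ∀ p q : A × L, Φ (sdBracket θA p q) = sdBracket θB (Φ p) (Φ q))
    (hproj : ∀ p : A × L, (Φ p).2 = p.2) :
    -- `β` is a 1-cocycle
    (∀ x y : L,
      (Φ (0, ⁅x, y⁆)).1 =
        θB x ((Φ (0, y)).1) - θB y ((Φ (0, x)).1) + ⁅(Φ (0, x)).1, (Φ (0, y)).1⁆) ∧
    -- `φ` is an algebra isomorphism from `A` onto `B`
    Function.Bijective (fun a : A => (Φ (a, 0)).1) ∧
      (∀ a a' : A, (Φ (a + a', 0)).1 = (Φ (a, 0)).1 + (Φ (a', 0)).1) ∧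
      (∀ (k : K) (a : A), (Φ (k • a, 0)).1 = k • (Φ (a, 0)).1) ∧
      (∀ a a' : A, (Φ (⁅a, a'⁆, 0)).1 = ⁅(Φ (a, 0)).1, (Φ (a', 0)).1⁆) ∧
      -- … which intertwines the `L`-action on `A` with the `β`-twisted action on `B`
      (∀ (x : L) (a : A),
        (Φ (θA x a, 0)).1 = ⁅(Φ (0, x)).1, (Φ (a, 0)).1⁆ + θB x ((Φ (a, 0)).1)) := by
  have h2x : ∀ x : L, (Φ (0, x)).2 = x := fun x => hproj (0, x)
  have h2a : ∀ a : A, (Φ (a, 0)).2 = (0 : L) := fun a => hproj (a, 0)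
  have hA0 : ∀ a : A, θA 0 a = 0 := by intro a; rw [map_zero θA]; rfl
  have hB0 : ∀ b : B, θB 0 b = 0 := by intro b; rw [map_zero θB]; rfl
  refine ⟨?_, ⟨?_, ?_⟩, ?_, ?_, ?_, ?_⟩
  · intro x y
    have h := hbr (0, x) (0, y)
    simp only [sdBracket, map_zero, sub_zero, zero_add, h2x, lie_zero, zero_sub, neg_zero,
      zero_lie, add_zero] at h
    rw [h]
  · intro a a' h
    simp only at h
    have : Φ (a, 0) = Φ (a', 0) := by
      ext
      · exact h
      · rw [h2a, h2a]
    have := Φ.injective this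
    exact (Prod.mk.injEq _ _ _ _).mp this |>.1
  · intro b
    refine ⟨(Φ.symm (b, 0)).1, ?_⟩
    have h2 : (Φ.symm (b, 0)).2 = (0 : L) := by
      have := hproj (Φ.symm (b, 0))
      rw [Φ.apply_symm_apply] at this
      exact this.symm
    have : ((Φ.symm (b, 0)).1, (0 : L)) = Φ.symm (b, 0) := by
      ext
      · rfl
      · exact h2.symm
    simp only [this, Φ.apply_symm_apply]
  · intro a a'
    have : ((a + a' : A), (0 : L)) = (a, (0:L)) + (a', 0) := by simp
    rw [this, map_add]; rfl
  · intro k a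
    have : ((k • a : A), (0 : L)) = k • (a, (0:L)) := by simp
    rw [this, map_smul]; rfl
  · intro a a'
    have h := hbr (a, 0) (a', 0)
    simp only [sdBracket, map_zero, LieDerivation.coe_zero, Pi.zero_apply, sub_zero, zero_add,
      lie_self, h2a, lie_zero, hA0, hB0] at h
    rw [h]
  · intro x a
    have h := hbr (0, x) (a, 0)
    simp only [sdBracket, map_zero, LieDerivation.coe_zero, Pi.zero_apply, sub_zero, zero_add,
      lie_zero, zero_lie, add_zero, h2x, h2a, lie_self, hA0, hB0] at h
    rw [h]
    abel_nf
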